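/- Let j ≥ 2 and x > 0, and consider the perturbed moment sequence γ^{(x)}_0 = 1, γ^{(x)}_n = x·γ^{(j)}_n for n ≥ 1, where γ^{(j)}_n = (j-1)!·n!/(n+j-1)!. Then the weights-squared sequence β_n := γ^{(x)}_{n+1}/γ^{(x)}_n is m-alternating (i.e., Σ_{i=0}^{m} (-1)^i C(m,i) β_{k+i} ≤ 0 for all k ≥ 0) if and only if x ≤ 1 + (j-1)·m! / ∏_{i=1}^{m} (j+i). -/

import Mathlib

open Finset

private lemma key_sum (m : ℕ) (a : ℝ) (ha : 0 < a) :
    ∑ i ∈ range (m+1), (-1:ℝ)^i * (m.choose i) * (1/(a+i)) =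
      (m.factorial : ℝ) / ∏ i ∈ range (m+1), (a + i) := by
  induction m generalizing a with
  | zero => simp
  | succ m ih =>
    have hA := ih a ha
    have hB := ih (a+1) (by linarith)
    have hT : ∑ i ∈ range (m+1), (-1:ℝ)^i * (m.choose (i+1)) * (1/(a+1+i))
        = 1/a - ∑ i ∈ range (m+1), (-1:ℝ)^i * (m.choose i) * (1/(a+i)) := by
      rw [Finset.sum_range_succ, Nat.choose_succ_self,
        Finset.sum_range_succ' (fun i => (-1:ℝ)^i * (m.choose i) * (1/(a+i)))]
      have hz : ∑ x ∈ range m, ((-1:ℝ)^x * (m.choose (x+1)) * (1/(a+1+x))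
          + (-1:ℝ)^(x+1) * (m.choose (x+1)) * (1/(a+((x+1:ℕ):ℝ)))) = 0 := by
        apply Finset.sum_eq_zero; intro x _; push_cast; ring
      rw [Finset.sum_add_distrib] at hz
      simp only [Nat.choose_zero_right, Nat.cast_zero, Nat.cast_one, mul_zero, zero_mul,
        add_zero, pow_zero, one_mul]
      linarith [hz]
    have h1 : ∑ i ∈ range (m+2), (-1:ℝ)^i * ((m+1).choose i) * (1/(a+i))
        = (∑ i ∈ range (m+1), (-1:ℝ)^i * (m.choose i) * (1/(a+i)))
          - ∑ i ∈ range (m+1), (-1:ℝ)^i * (m.choose i) * (1/(a+1+i)) := by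
      rw [Finset.sum_range_succ' (fun i => (-1:ℝ)^i * ((m+1).choose i) * (1/(a+i)))]
      have hz : ∑ i ∈ range (m+1), ((-1:ℝ)^(i+1) * ((m+1).choose (i+1)) * (1/(a+((i+1:ℕ):ℝ)))
          + (-1:ℝ)^i * (m.choose (i+1)) * (1/(a+1+i))
          + (-1:ℝ)^i * (m.choose i) * (1/(a+1+i))) = 0 := by
        apply Finset.sum_eq_zero; intro i _
        rw [Nat.choose_succ_succ]
        push_cast
        ring
      rw [Finset.sum_add_distrib, Finset.sum_add_distrib] at hz
      simp only [Nat.choose_zero_right, Nat.cast_zero, Nat.cast_one, mul_zero, zero_mul,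
        add_zero, pow_zero, one_mul]
      linarith [hz, hT]
    rw [h1, hA, hB]
    have hP1 : (0:ℝ) < ∏ i ∈ range (m+1), (a + i) :=
      Finset.prod_pos fun i _ => by positivity
    have hP2 : (0:ℝ) < ∏ i ∈ range (m+1), (a + 1 + i) :=
      Finset.prod_pos fun i _ => by positivity
    have hQ1 : ∏ i ∈ range (m+2), (a + i) = (a + (↑m+1)) * ∏ i ∈ range (m+1), (a + i) := by
      rw [Finset.prod_range_succ]; push_cast; ring
    have hQ2 : ∏ i ∈ range (m+2), (a + i) = a * ∏ i ∈ range (m+1), (a + 1 + i) := by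
      rw [Finset.prod_range_succ' (fun i => a + (i:ℝ))]
      have e : ∀ x ∈ range (m+1), a + ((x+1:ℕ):ℝ) = a + 1 + x := by
        intro x _; push_cast; ring
      rw [Finset.prod_congr rfl e]
      push_cast; ring
    rw [hQ1]
    rw [show (∏ i ∈ range (m+1), (a + 1 + i)) = ((a + (↑m+1)) * ∏ i ∈ range (m+1), (a + i))/a by
      rw [← hQ1, hQ2]; field_simp]
    rw [Nat.factorial_succ]
    push_cast
    field_simp
    ring

private lemma alt_zero (m : ℕ) (hm : 1 ≤ m) :
    ∑ i ∈ range (m+1), (-1:ℝ)^i * (m.choose i) = 0 := by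
  have h := Int.alternating_sum_range_choose_of_ne (n := m) (by omega)
  have := congrArg (fun z : ℤ => (z : ℝ)) h
  push_cast at this
  simpa using this

private lemma bsum (j m : ℕ) (hj : 2 ≤ j) (hm : 1 ≤ m) (c : ℝ) (hc : 0 ≤ c) :
    ∑ i ∈ range (m+1), (-1:ℝ)^i * (m.choose i) * ((c+i+1)/(c+i+j)) =
      -(((j:ℝ)-1) * m.factorial) / ∏ i ∈ range (m+1), (c + j + i) := by
  have hj2 : (2:ℝ) ≤ j := by exact_mod_cast hj
  have ha : (0:ℝ) < c + j := by linarith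
  have hterm : ∀ i ∈ range (m+1), (-1:ℝ)^i * (m.choose i) * ((c+i+1)/(c+i+j))
      = (-1:ℝ)^i * (m.choose i) - ((j:ℝ)-1) * ((-1:ℝ)^i * (m.choose i) * (1/(c+(j:ℝ)+i))) := by
    intro i _
    have hi : (0:ℝ) ≤ i := Nat.cast_nonneg i
    have hpos : (0:ℝ) < c + i + j := by linarith
    have hpos' : (0:ℝ) < c + (j:ℝ) + i := by linarith
    field_simp
    ring
  rw [Finset.sum_congr rfl hterm, Finset.sum_sub_distrib, alt_zero m hm, ← Finset.mul_sum,
    key_sum m (c + j) ha, zero_sub]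
  ring

theorem stmt19 (j : ℕ) (hj : 2 ≤ j) (x : ℝ) (hx : 0 < x) (m : ℕ) (hm : 1 ≤ m)
    (β : ℕ → ℝ)
    (hβ0 : β 0 = x / (j : ℝ))
    (hβ : ∀ n : ℕ, 1 ≤ n → β n = ((n : ℝ) + 1) / ((n : ℝ) + j)) :
    (∀ k : ℕ, ∑ i ∈ Finset.range (m+1), (-1 : ℝ)^i * (m.choose i) * β (k+i) ≤ 0)
      ↔ x ≤ 1 + ((j : ℝ) - 1) * (m.factorial : ℝ) / ∏ i ∈ Finset.Icc 1 m, ((j : ℝ) + i) := by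
  have hj2 : (2:ℝ) ≤ j := by exact_mod_cast hj
  have hjpos : (0:ℝ) < j := by linarith
  have hP : (0:ℝ) < ∏ i ∈ Finset.Icc 1 m, ((j:ℝ)+i) := by
    apply Finset.prod_pos
    intro i _
    have : (0:ℝ) ≤ i := Nat.cast_nonneg i
    linarith
  have hfac : (0:ℝ) < m.factorial := by exact_mod_cast m.factorial_pos
  -- products relation
  have hprod : ∏ i ∈ range (m+1), ((0:ℝ) + j + i) = j * ∏ i ∈ Finset.Icc 1 m, ((j:ℝ)+i) := by
    rw [Finset.prod_range_succ' (fun i => (0:ℝ) + j + i)]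
    rw [← Finset.Ico_add_one_right_eq_Icc, Finset.prod_Ico_eq_prod_range]
    simp only [Nat.add_sub_cancel]
    rw [show ∏ i ∈ range m, ((j:ℝ) + ((1+i:ℕ):ℝ)) = ∏ i ∈ range m, ((0:ℝ)+(j:ℝ)+((i+1:ℕ):ℝ))
      from Finset.prod_congr rfl (fun i _ => by push_cast; ring)]
    push_cast
    ring
  -- value at k = 0
  have hk0 : ∑ i ∈ range (m+1), (-1:ℝ)^i * (m.choose i) * β (0+i)
      = (x - (1 + ((j:ℝ)-1) * (m.factorial:ℝ) / ∏ i ∈ Finset.Icc 1 m, ((j:ℝ)+i))) / j := by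
    have hs : ∑ i ∈ range (m+1), (-1:ℝ)^i * (m.choose i) * β (0+i)
        = (∑ i ∈ range (m+1), (-1:ℝ)^i * (m.choose i) * (((0:ℝ)+i+1)/((0:ℝ)+i+j)))
          + (x/j - 1/j) := by
      rw [Finset.sum_range_succ' (fun i => (-1:ℝ)^i * (m.choose i) * β (0+i)),
        Finset.sum_range_succ' (fun i => (-1:ℝ)^i * (m.choose i) * (((0:ℝ)+i+1)/((0:ℝ)+i+j)))]
      have e : ∀ i ∈ range m, (-1:ℝ)^(i+1) * (m.choose (i+1)) * β (0+(i+1))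
          = (-1:ℝ)^(i+1) * (m.choose (i+1)) * (((0:ℝ)+((i+1:ℕ):ℝ)+1)/((0:ℝ)+((i+1:ℕ):ℝ)+j)) := by
        intro i _
        rw [show (0:ℕ)+(i+1) = i+1 by ring, hβ (i+1) (by omega)]
        push_cast
        ring_nf
      rw [Finset.sum_congr rfl e]
      simp only [Nat.choose_zero_right, Nat.cast_zero, Nat.cast_one, pow_zero, one_mul,
        add_zero, Nat.add_zero, zero_add]
      rw [hβ0]
      ring
    rw [hs, bsum j m hj hm 0 le_rfl, hprod]
    field_simp
    ring
  constructor
  · intro H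
    have h0 := H 0
    rw [hk0] at h0
    have := (div_nonpos_iff.mp h0)
    rcases this with ⟨h1, h2⟩ | ⟨h1, h2⟩
    · linarith
    · linarith
  · intro hxle k
    rcases Nat.eq_zero_or_pos k with rfl | hk
    · rw [hk0]
      apply div_nonpos_of_nonpos_of_nonneg _ (le_of_lt hjpos)
      linarith
    · have e : ∀ i ∈ range (m+1), (-1:ℝ)^i * (m.choose i) * β (k+i)
          = (-1:ℝ)^i * (m.choose i) * (((k:ℝ)+i+1)/((k:ℝ)+i+j)) := by
        intro i _
        rw [hβ (k+i) (by omega)]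
        push_cast
        ring_nf
      rw [Finset.sum_congr rfl e, bsum j m hj hm (k:ℝ) (Nat.cast_nonneg k)]
      apply div_nonpos_of_nonpos_of_nonneg
      · have : (0:ℝ) ≤ ((j:ℝ)-1) * m.factorial := by nlinarith
        linarith
      · apply le_of_lt
        apply Finset.prod_pos
        intro i _
        have h1 : (0:ℝ) ≤ i := Nat.cast_nonneg i
        have h2 : (0:ℝ) ≤ k := Nat.cast_nonneg k
        linarith
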